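/- Let K be a field of characteristic different from 2 and let L = K(√d) and L′ = K(√d′) be two linearly disjoint quadratic field extensions of K (equivalently, d, d′, dd′ are all non-squares in K). Set M = L ⊗_K L′ = K(√d, √d′). Then N^*_{L/K} ∩ N^*_{L′/K} = K^×² · N^*_{M/K}, where N^*_{M/K} is the image of the norm map from the biquadratic extension M. -/

import Mathlib

open QuadraticMap TensorProduct Module

/-- Diagonal quadratic form ⟨a 0, …, a (n-1)⟩. -/
noncomputable def diagF (K : Type) [Field K] {n : ℕ} (a : Fin n → K) :
    QuadraticForm K (Fin n → K) :=
  QuadraticMap.weightedSumSquares K a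

/-- Orthogonal sum of m hyperbolic planes ⟨1,−1,1,−1,…⟩. -/
noncomputable def hypF (K : Type) [Field K] (m : ℕ) :
    QuadraticForm K (Fin (2 * m) → K) :=
  QuadraticMap.weightedSumSquares K (fun i : Fin (2 * m) => (-1 : K) ^ (i : ℕ))

/-- A form is hyperbolic if it is isometric to a sum of hyperbolic planes. -/
def IsHyp (K : Type) [Field K] {V : Type} [AddCommGroup V] [Module K V]
    (Q : QuadraticForm K V) : Prop :=
  ∃ m : ℕ, QuadraticMap.Equivalent Q (hypF K m)

/-- Regularity (non-degeneracy) of a quadratic form, via its polar bilinear form. -/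
def RegularQF (K : Type) [Field K] {V : Type} [AddCommGroup V] [Module K V]
    (Q : QuadraticForm K V) : Prop :=
  (QuadraticMap.polarBilin Q).Nondegenerate

/-- Witt index: largest dimension of a totally isotropic subspace. -/
noncomputable def wIdx (K : Type) [Field K] {V : Type} [AddCommGroup V] [Module K V]
    (Q : QuadraticForm K V) : ℕ :=
  sSup {m : ℕ | ∃ W : Submodule K V, Module.finrank K W = m ∧ ∀ v ∈ W, Q v = 0}

/-- The n-fold Pfister form ⟪a 0, …, a (n-1)⟫. -/
noncomputable def pfister (K : Type) [Field K] {n : ℕ} (a : Fin n → K) :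
    QuadraticForm K ((Fin n → Bool) → K) :=
  QuadraticMap.weightedSumSquares K
    (fun s : Fin n → Bool => ∏ i : Fin n, if s i then -a i else 1)

/-- Witt equivalence of two quadratic forms. -/
def WittEquiv (K : Type) [Field K] {V W : Type} [AddCommGroup V] [Module K V]
    [AddCommGroup W] [Module K W] (Q₁ : QuadraticForm K V) (Q₂ : QuadraticForm K W) : Prop :=
  ∃ m₁ m₂ : ℕ, QuadraticMap.Equivalent (Q₁.prod (hypF K m₁)) (Q₂.prod (hypF K m₂))

/-- Orthogonal sum of a family of n-fold Pfister forms. -/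
noncomputable def pfisterSum (K : Type) [Field K] {n k : ℕ} (a : Fin k → Fin n → K) :
    QuadraticForm K (Fin k → (Fin n → Bool) → K) :=
  QuadraticMap.pi (fun j : Fin k => pfister K (a j))

/-- The Witt class of Q lies in the n-th power Iⁿ(K) of the fundamental ideal:
Q together with some sum of n-fold Pfister forms is Witt equivalent to another
sum of n-fold Pfister forms. -/
def InI (K : Type) [Field K] (n : ℕ) {V : Type} [AddCommGroup V] [Module K V]
    (Q : QuadraticForm K V) : Prop :=
  ∃ (k₁ k₂ : ℕ) (a₁ : Fin k₁ → Fin n → K) (a₂ : Fin k₂ → Fin n → K),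
    (∀ j i, a₁ j i ≠ 0) ∧ (∀ j i, a₂ j i ≠ 0) ∧
      WittEquiv K (Q.prod (pfisterSum K a₁)) (pfisterSum K a₂)

/-- A field extension of K, bundled. -/
structure FieldExt (K : Type) [Field K] where
  carrier : Type
  [field : Field carrier]
  [alg : Algebra K carrier]

attribute [instance] FieldExt.field FieldExt.alg


section myaux
variable {K E : Type} [Field K] [Field E] [Algebra K E]

lemma pairZero (d : K) (hd : ∀ s : K, s ^ 2 ≠ d) {e : E} (he : e ^ 2 = algebraMap K E d) :
    ∀ p q : K, algebraMap K E p + algebraMap K E q * e = 0 → p = 0 ∧ q = 0 := by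
  intro p q h
  by_cases hq : q = 0
  · subst hq
    simp only [map_zero, zero_mul, add_zero] at h
    exact ⟨(algebraMap K E).injective (by simpa using h), rfl⟩
  · exfalso
    have he' : e = algebraMap K E (-p / q) := by
      have hq' : algebraMap K E q ≠ 0 := by
        simpa using fun hh => hq ((algebraMap K E).injective (by simpa using hh))
      rw [map_div₀, map_neg, eq_div_iff hq']
      linear_combination h
    apply hd (-p / q)
    apply (algebraMap K E).injective
    rw [map_pow, ← he', he]

lemma quadRepr (d : K) (hd : ∀ s : K, s ^ 2 ≠ d) {e : E} (he : e ^ 2 = algebraMap K E d)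
    (hfin : Module.finrank K E = 2) :
    ∀ x : E, ∃ a b : K, x = algebraMap K E a + algebraMap K E b * e := by
  haveI : FiniteDimensional K E := .of_finrank_eq_succ hfin
  have hli : LinearIndependent K ![(1 : E), e] := by
    rw [Fintype.linearIndependent_iff]
    intro g hg
    have := pairZero d hd he (g 0) (g 1) (by
      simpa [Fin.sum_univ_two, Algebra.smul_def] using hg)
    intro i
    fin_cases i
    · exact this.1
    · exact this.2
  let B : Basis (Fin 2) K E := basisOfLinearIndependentOfCardEqFinrank hli (by simp [hfin])
  have hB : ⇑B = ![(1 : E), e] := coe_basisOfLinearIndependentOfCardEqFinrank hli _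
  have hB0 : B 0 = 1 := by rw [hB]; rfl
  have hB1 : B 1 = e := by rw [hB]; rfl
  intro x
  refine ⟨B.repr x 0, B.repr x 1, ?_⟩
  conv_lhs => rw [← B.sum_repr x]
  rw [Fin.sum_univ_two, hB0, hB1]
  simp [Algebra.smul_def]

lemma normQuad (d : K) (hd : ∀ s : K, s ^ 2 ≠ d) {e : E} (he : e ^ 2 = algebraMap K E d)
    (hfin : Module.finrank K E = 2) (a b : K) :
    Algebra.norm K (algebraMap K E a + algebraMap K E b * e) = a ^ 2 - d * b ^ 2 := by
  haveI : FiniteDimensional K E := .of_finrank_eq_succ hfin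
  have hli : LinearIndependent K ![(1 : E), e] := by
    rw [Fintype.linearIndependent_iff]
    intro g hg
    have := pairZero d hd he (g 0) (g 1) (by
      simpa [Fin.sum_univ_two, Algebra.smul_def] using hg)
    intro i
    fin_cases i
    · exact this.1
    · exact this.2
  let B : Basis (Fin 2) K E := basisOfLinearIndependentOfCardEqFinrank hli (by simp [hfin])
  have hB : ⇑B = ![(1 : E), e] := coe_basisOfLinearIndependentOfCardEqFinrank hli _
  have hB0 : B 0 = 1 := by rw [hB]; rfl
  have hB1 : B 1 = e := by rw [hB]; rfl
  have key : ∀ p q : K, ∀ i, B.repr (algebraMap K E p + algebraMap K E q * e) i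
      = ![p, q] i := by
    intro p q i
    have : algebraMap K E p + algebraMap K E q * e = p • B 0 + q • B 1 := by
      rw [hB0, hB1, Algebra.smul_def, Algebra.smul_def, mul_one]
    rw [this, map_add, _root_.map_smul, _root_.map_smul, B.repr_self, B.repr_self]
    fin_cases i <;> simp [Finsupp.single_apply]
  rw [Algebra.norm_eq_matrix_det B, Matrix.det_fin_two]
  have h0 : (algebraMap K E a + algebraMap K E b * e) * B 0
      = algebraMap K E a + algebraMap K E b * e := by rw [hB0, mul_one]
  have h1 : (algebraMap K E a + algebraMap K E b * e) * B 1
      = algebraMap K E (b * d) + algebraMap K E a * e := by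
    rw [hB1, map_mul]
    linear_combination (algebraMap K E b) * he
  rw [Algebra.leftMulMatrix_eq_repr_mul, Algebra.leftMulMatrix_eq_repr_mul,
    Algebra.leftMulMatrix_eq_repr_mul, Algebra.leftMulMatrix_eq_repr_mul,
    h0, h1, key, key, key, key]
  simp
  ring

lemma biIndep (d d' : K) (h1 : ∀ s : K, s ^ 2 ≠ d) (h2 : ∀ s : K, s ^ 2 ≠ d')
    (h3 : ∀ s : K, s ^ 2 ≠ d * d') (hd' : d' ≠ 0) (h2K : (2 : K) ≠ 0)
    {s t : E} (hs : s ^ 2 = algebraMap K E d) (ht : t ^ 2 = algebraMap K E d') :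
    ∀ α β γ δ : K, algebraMap K E α + algebraMap K E β * s + algebraMap K E γ * t
      + algebraMap K E δ * (s * t) = 0 → α = 0 ∧ β = 0 ∧ γ = 0 ∧ δ = 0 := by
  set A := algebraMap K E with hA
  intro α β γ δ h
  have hPQ' : (A α ^ 2 + A d * A β ^ 2 - A d' * A γ ^ 2 - A d * A d' * A δ ^ 2)
      + (2 * (A α * A β) - 2 * (A d' * (A γ * A δ))) * s = 0 := by
    linear_combination (A α + A β * s - A γ * t - A δ * (s * t)) * h - A β ^ 2 * hs
      + A γ ^ 2 * ht + 2 * A γ * A δ * s * ht + A δ ^ 2 * s ^ 2 * ht + A δ ^ 2 * A d' * hs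
  have hPQ : A (α ^ 2 + d * β ^ 2 - d' * γ ^ 2 - d * d' * δ ^ 2)
      + A (2 * (α * β) - 2 * (d' * (γ * δ))) * s = 0 := by
    simp only [map_add, _root_.map_sub, map_mul, map_pow, map_ofNat]
    convert hPQ' using 2
  obtain ⟨E1, E2⟩ := pairZero d h1 hs _ _ hPQ
  by_cases hgd : γ = 0 ∧ δ = 0
  · obtain ⟨hg, hdl⟩ := hgd
    subst hg; subst hdl
    have h' : A α + A β * s = 0 := by simpa using h
    obtain ⟨ha, hb⟩ := pairZero d h1 hs _ _ h'
    exact ⟨ha, hb, rfl, rfl⟩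
  · exfalso
    have hn : γ ^ 2 - d * δ ^ 2 ≠ 0 := by
      intro hn0
      apply hgd
      by_cases hdl : δ = 0
      · subst hdl
        constructor
        · have : γ ^ 2 = 0 := by linear_combination hn0
          exact pow_eq_zero_iff (n := 2) (by norm_num) |>.mp this
        · rfl
      · exact absurd (by field_simp; linear_combination hn0) (h1 (γ / δ))
    have F2 : (α * γ - d * β * δ) * (β * γ - α * δ) = 0 := by
      have h2PQ : 2 * ((α * γ - d * β * δ) * (β * γ - α * δ)) = 0 := by
        linear_combination (γ ^ 2 + d * δ ^ 2) * E2 - 2 * γ * δ * E1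
      exact (mul_eq_zero.mp h2PQ).resolve_left h2K
    have F1 : (α * γ - d * β * δ) ^ 2 + d * (β * γ - α * δ) ^ 2
        = d' * (γ ^ 2 - d * δ ^ 2) ^ 2 := by
      linear_combination (γ ^ 2 + d * δ ^ 2) * E1 - 2 * d * γ * δ * E2
    rcases mul_eq_zero.mp F2 with hP | hQ
    · have hQ0 : β * γ - α * δ ≠ 0 := by
        intro h0
        rw [hP, h0] at F1
        simp only [ne_eq, OfNat.ofNat_ne_zero, not_false_eq_true, zero_pow, mul_zero,
          add_zero] at F1
        exact hn (pow_eq_zero_iff (n := 2) (by norm_num) |>.mp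
          (by rcases mul_eq_zero.mp F1.symm with h | h; exact absurd h hd'; exact h))
      exact h3 (d * (β * γ - α * δ) / (γ ^ 2 - d * δ ^ 2)) (by
        field_simp
        linear_combination d * F1 - d * (α * γ - d * β * δ) * hP)
    · have hP0 : α * γ - d * β * δ ≠ 0 := by
        intro h0
        rw [hQ, h0] at F1
        simp only [ne_eq, OfNat.ofNat_ne_zero, not_false_eq_true, zero_pow, mul_zero,
          add_zero, zero_add] at F1
        exact hn (pow_eq_zero_iff (n := 2) (by norm_num) |>.mp
          (by rcases mul_eq_zero.mp F1.symm with h | h; exact absurd h hd'; exact h))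
      exact h2 ((α * γ - d * β * δ) / (γ ^ 2 - d * δ ^ 2)) (by
        field_simp
        linear_combination F1 - d * (β * γ - α * δ) * hQ)

lemma det4 (a b c d e f g h i j k l m n o p : K) :
    (!![a, b, c, d; e, f, g, h; i, j, k, l; m, n, o, p] : Matrix (Fin 4) (Fin 4) K).det
      = a*(f*(k*p-l*o) - g*(j*p-l*n) + h*(j*o-k*n))
        - b*(e*(k*p-l*o) - g*(i*p-l*m) + h*(i*o-k*m))
        + c*(e*(j*p-l*n) - f*(i*p-l*m) + h*(i*n-j*m))
        - d*(e*(j*o-k*n) - f*(i*o-k*m) + g*(i*n-j*m)) := by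
  rw [Matrix.det_succ_row_zero]
  simp [Fin.sum_univ_succ, Matrix.det_fin_three, Matrix.submatrix_apply, Fin.succAbove]
  ring

lemma biNormAux (d d' : K) {s t : E}
    (hs : s ^ 2 = algebraMap K E d) (ht : t ^ 2 = algebraMap K E d')
    (hBI : ∀ α β γ δ : K, algebraMap K E α + algebraMap K E β * s + algebraMap K E γ * t
      + algebraMap K E δ * (s * t) = 0 → α = 0 ∧ β = 0 ∧ γ = 0 ∧ δ = 0)
    (hfin : Module.finrank K E = 4) :
    (∀ α β γ δ : K, Algebra.norm K (algebraMap K E α + algebraMap K E β * s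
        + algebraMap K E γ * t + algebraMap K E δ * (s * t))
      = (α ^ 2 + d * β ^ 2 - d' * γ ^ 2 - d * d' * δ ^ 2) ^ 2
        - d * (2 * α * β - 2 * d' * γ * δ) ^ 2) ∧
    (∀ z : E, ∃ α β γ δ : K, z = algebraMap K E α + algebraMap K E β * s
        + algebraMap K E γ * t + algebraMap K E δ * (s * t)) := by
  haveI : FiniteDimensional K E := .of_finrank_eq_succ hfin
  set A := algebraMap K E with hA
  have hli : LinearIndependent K ![(1 : E), s, t, s * t] := by
    rw [Fintype.linearIndependent_iff]
    intro g hg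
    have hg' : A (g 0) + A (g 1) * s + A (g 2) * t + A (g 3) * (s * t) = 0 := by
      have := hg
      simp only [Fin.sum_univ_four] at this
      simpa [Algebra.smul_def] using this
    obtain ⟨h0, h1, h2, h3⟩ := hBI _ _ _ _ hg'
    intro i
    fin_cases i <;> assumption
  let B : Basis (Fin 4) K E := basisOfLinearIndependentOfCardEqFinrank hli (by simp [hfin])
  have hB : ⇑B = ![(1 : E), s, t, s * t] := coe_basisOfLinearIndependentOfCardEqFinrank hli _
  have hB0 : B 0 = 1 := by rw [hB]; rfl
  have hB1 : B 1 = s := by rw [hB]; rfl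
  have hB2 : B 2 = t := by rw [hB]; rfl
  have hB3 : B 3 = s * t := by rw [hB]; rfl
  have key : ∀ p q r u : K, ∀ i, B.repr (A p + A q * s + A r * t + A u * (s * t)) i
      = ![p, q, r, u] i := by
    intro p q r u i
    have hx : A p + A q * s + A r * t + A u * (s * t)
        = p • B 0 + q • B 1 + r • B 2 + u • B 3 := by
      rw [hB0, hB1, hB2, hB3]
      simp [Algebra.smul_def, hA]
    rw [hx, map_add, map_add, map_add, _root_.map_smul, _root_.map_smul, _root_.map_smul, _root_.map_smul,
      B.repr_self, B.repr_self, B.repr_self, B.repr_self]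
    fin_cases i <;> simp [Finsupp.single_apply]
  constructor
  · intro α β γ δ
    set z := A α + A β * s + A γ * t + A δ * (s * t) with hz
    have m0 : z * B 0 = A α + A β * s + A γ * t + A δ * (s * t) := by rw [hB0, mul_one]
    have m1 : z * B 1 = A (β * d) + A α * s + A (δ * d) * t + A γ * (s * t) := by
      rw [hB1, hz]; simp only [map_mul]; linear_combination (A β + A δ * t) * hs
    have m2 : z * B 2 = A (γ * d') + A (δ * d') * s + A α * t + A β * (s * t) := by
      rw [hB2, hz]; simp only [map_mul]; linear_combination (A γ + A δ * s) * ht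
    have m3 : z * B 3 = A (δ * d * d') + A (γ * d') * s + A (β * d) * t + A α * (s * t) := by
      rw [hB3, hz]; simp only [map_mul]
      linear_combination (A β * t + A δ * t ^ 2) * hs + (A γ * s + A δ * A d) * ht
    rw [Algebra.norm_eq_matrix_det B]
    have hmat : Algebra.leftMulMatrix B z
        = !![α, β * d, γ * d', δ * d * d';
             β, α, δ * d', γ * d';
             γ, δ * d, α, β * d;
             δ, γ, β, α] := by
      ext i j
      rw [Algebra.leftMulMatrix_eq_repr_mul]
      fin_cases j <;>
        simp only [Fin.zero_eta, Fin.mk_one, Fin.reduceFinMk, Fin.isValue] <;>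
        [rw [m0, key]; rw [m1, key]; rw [m2, key]; rw [m3, key]] <;>
        (fin_cases i <;> rfl)
    rw [hmat, det4]
    ring
  · intro z
    refine ⟨B.repr z 0, B.repr z 1, B.repr z 2, B.repr z 3, ?_⟩
    conv_lhs => rw [← B.sum_repr z]
    rw [Fin.sum_univ_four, hB0, hB1, hB2, hB3]
    simp [Algebra.smul_def, hA]

end myaux

/-- for linearly disjoint quadratic extensions L = K(√d), L′ = K(√d′) and
M = K(√d,√d′), one has N*_{L/K} ∩ N*_{L′/K} = K^×² · N*_{M/K}. -/
theorem stmt_5 (K : Type) [Field K] [Invertible (2 : K)] (d d' : K)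
    (hd : d ≠ 0) (hd' : d' ≠ 0)
    (h1 : ∀ s : K, s ^ 2 ≠ d) (h2 : ∀ s : K, s ^ 2 ≠ d') (h3 : ∀ s : K, s ^ 2 ≠ d * d')
    (L : Type) [Field L] [Algebra K L] (hL : Module.finrank K L = 2)
    (sL : L) (hsL : sL ^ 2 = algebraMap K L d)
    (L' : Type) [Field L'] [Algebra K L'] (hL' : Module.finrank K L' = 2)
    (sL' : L') (hsL' : sL' ^ 2 = algebraMap K L' d')
    (M : Type) [Field M] [Algebra K M] (hM : Module.finrank K M = 4)
    (sM tM : M) (hsM : sM ^ 2 = algebraMap K M d) (htM : tM ^ 2 = algebraMap K M d') :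
    ∀ c : K, c ≠ 0 →
      (((∃ x : L, Algebra.norm K x = c) ∧ (∃ y : L', Algebra.norm K y = c)) ↔
        ∃ (s : K) (z : M), s ≠ 0 ∧ c = s ^ 2 * Algebra.norm K z) := by
  intro c hc
  have h2K : (2 : K) ≠ 0 := Invertible.ne_zero 2
  have hBI := biIndep d d' h1 h2 h3 hd' h2K hsM htM
  obtain ⟨hN4, hRepr⟩ := biNormAux d d' hsM htM hBI hM
  set A := algebraMap K M with hA
  constructor
  · rintro ⟨⟨x, hx⟩, ⟨y, hy⟩⟩
    obtain ⟨a, b, rfl⟩ := quadRepr d h1 hsL hL x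
    obtain ⟨a', b', rfl⟩ := quadRepr d' h2 hsL' hL' y
    rw [normQuad d h1 hsL hL] at hx
    rw [normQuad d' h2 hsL' hL'] at hy
    have fwd : ∀ a b a' b' : K, a ^ 2 - d * b ^ 2 = c → a' ^ 2 - d' * b' ^ 2 = c →
        a + a' ≠ 0 → ∃ (s : K) (z : M), s ≠ 0 ∧ c = s ^ 2 * Algebra.norm K z := by
      intro a b a' b' hx hy hne
      refine ⟨(2 * (a + a'))⁻¹, A (a + a') + A b * sM + A b' * tM + A 0 * (sM * tM),
        inv_ne_zero (mul_ne_zero h2K hne), ?_⟩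
      have h4 : Algebra.norm K (A (a + a') + A b * sM + A b' * tM + A 0 * (sM * tM))
          = (2 * (a + a')) ^ 2 * c := by
        rw [hN4]
        linear_combination
          (2 * a * (a + a') + (a + a') ^ 2 + d * b ^ 2 - d' * b' ^ 2 - 4 * (a + a') ^ 2)
              * (-hx)
          - (2 * a * (a + a') + (a + a') ^ 2 + d * b ^ 2 - d' * b' ^ 2) * (-hy)
      rw [h4]
      field_simp
    by_cases hpp : a + a' ≠ 0
    · exact fwd a b a' b' hx hy hpp
    · by_cases hpm : a + -a' ≠ 0
      · exact fwd a b (-a') (-b') hx (by linear_combination hy) hpm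
      · exfalso
        push_neg at hpp hpm
        have ha : a = 0 := by
          have h2a : 2 * a = 0 := by linear_combination hpp + hpm
          exact (mul_eq_zero.mp h2a).resolve_left h2K
        have ha' : a' = 0 := by
          have h2a : 2 * a' = 0 := by linear_combination hpp - hpm
          exact (mul_eq_zero.mp h2a).resolve_left h2K
        rw [ha] at hx
        rw [ha'] at hy
        have hb : b ≠ 0 := by
          intro h0; rw [h0] at hx; apply hc; linear_combination -hx
        have hb' : b' ≠ 0 := by
          intro h0; rw [h0] at hy; apply hc; linear_combination -hy
        apply h3 (d * b / b')
        field_simp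
        linear_combination (hy - hx)
  · rintro ⟨s, z, hs0, hcz⟩
    obtain ⟨α, β, γ, δ, rfl⟩ := hRepr z
    rw [hN4] at hcz
    constructor
    · refine ⟨algebraMap K L (s * (α ^ 2 + d * β ^ 2 - d' * γ ^ 2 - d * d' * δ ^ 2))
        + algebraMap K L (s * (2 * α * β - 2 * d' * γ * δ)) * sL, ?_⟩
      rw [normQuad d h1 hsL hL]
      linear_combination -hcz
    · refine ⟨algebraMap K L' (s * (α ^ 2 + d' * γ ^ 2 - d * β ^ 2 - d * d' * δ ^ 2))
        + algebraMap K L' (s * (2 * α * γ - 2 * d * β * δ)) * sL', ?_⟩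
      rw [normQuad d' h2 hsL' hL']
      linear_combination -hcz
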